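/- arXiv:1906.00278 — 5 statements merged into one kernel-verified Lean document; each statement's English description precedes it below -/
import Mathlib

section
/- Suppose r < min_i N_i and r' < min_i N_i, f_1,...,f_r ∈ [0,1)^d are pairwise distinct, f'_1,...,f'_{r'} ∈ [0,1)^d are pairwise distinct, σ_ℓ > 0 for ℓ = 1,...,r and σ'_ℓ > 0 for ℓ = 1,...,r', and ∑_{ℓ=1}^{r} σ_ℓ a(f_ℓ) a(f_ℓ)ᴴ = ∑_{ℓ=1}^{r'} σ'_ℓ a(f'_ℓ) a(f'_ℓ)ᴴ. Then r = r' and there is a permutation π of {1,...,r} with f'_{π(ℓ)} = f_ℓ and σ'_{π(ℓ)} = σ_ℓ for all ℓ; that is, the (d+1)-tuples (f_ℓ, σ_ℓ) in the MD Vandermonde decomposition are unique. -/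
open Complex Matrix BigOperators
open scoped ComplexOrder

/-- The multi-dimensional sinusoid `a(f)`, `a(f)(m) = ∏ i, exp(2πi m_i f_i)`. -/
noncomputable def sinusoid {d : ℕ} (N : Fin d → ℕ) (f : Fin d → ℝ) :
    (∀ i, Fin (N i)) → ℂ :=
  fun m => ∏ i, Complex.exp (2 * (Real.pi : ℂ) * Complex.I * ((m i : ℕ) : ℂ) * ((f i : ℝ) : ℂ))

/-- The `d`-level block Toeplitz matrix `T(B)(m,n) = B(m-n)`. -/
noncomputable def toepT {d : ℕ} (N : Fin d → ℕ) (B : (Fin d → ℤ) → ℂ) :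
    Matrix (∀ i, Fin (N i)) (∀ i, Fin (N i)) ℂ :=
  Matrix.of fun m n => B (fun i => (m i : ℤ) - (n i : ℤ))

lemma exp_two_pi_inj {a b : ℝ} (ha : a ∈ Set.Ico (0:ℝ) 1) (hb : b ∈ Set.Ico (0:ℝ) 1)
    (h : Complex.exp (2 * (Real.pi:ℂ) * Complex.I * a) = Complex.exp (2 * (Real.pi:ℂ) * Complex.I * b)) :
    a = b := by
  rw [Complex.exp_eq_exp_iff_exists_int] at h
  obtain ⟨n, hn⟩ := h
  have h2 : (2 * (Real.pi:ℂ) * Complex.I) * a = (2 * (Real.pi:ℂ) * Complex.I) * (b + n) := by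
    rw [hn]; ring
  have hne : (2 * (Real.pi:ℂ) * Complex.I) ≠ 0 := by
    simp [Real.pi_ne_zero, Complex.I_ne_zero, Complex.ofReal_ne_zero]
  have h3 : (a:ℂ) = (b:ℂ) + n := mul_left_cancel₀ hne h2
  have h4 : a = b + n := by exact_mod_cast h3
  have h5 : (n:ℝ) = a - b := by linarith
  have h6 : -1 < (n:ℝ) := by
    rw [h5]; rcases ha with ⟨ha0, ha1⟩; rcases hb with ⟨hb0, hb1⟩; linarith
  have h7 : (n:ℝ) < 1 := by
    rw [h5]; rcases ha with ⟨ha0, ha1⟩; rcases hb with ⟨hb0, hb1⟩; linarith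
  have hn0 : n = 0 := by
    have h8 : -1 < n := by exact_mod_cast h6
    have h9 : n < 1 := by exact_mod_cast h7
    omega
  simp [hn0] at h5; linarith

lemma sinusoid_eq_pow {d : ℕ} (N : Fin d → ℕ) (h : Fin d → ℝ) (m : ∀ i, Fin (N i)) :
    sinusoid N h m = ∏ i, Complex.exp (2 * (Real.pi:ℂ) * Complex.I * (h i : ℝ)) ^ ((m i : ℕ)) := by
  refine Finset.prod_congr rfl fun i _ => ?_
  rw [← Complex.exp_nat_mul]
  ring_nf

lemma sinusoid_li {d : ℕ} (hd : 0 < d) (N : Fin d → ℕ) {k : ℕ} (hk : ∀ i, k ≤ N i)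
    (g : Fin k → Fin d → ℝ) (hg : Function.Injective g)
    (hmem : ∀ ℓ i, g ℓ i ∈ Set.Ico (0:ℝ) 1) :
    LinearIndependent ℂ (fun ℓ => sinusoid N (g ℓ)) := by
  classical
  rw [Fintype.linearIndependent_iff]
  intro c hc ℓ₀
  have h1k : 1 ≤ k := ℓ₀.pos
  set W : (Fin d → ℝ) → Fin d → ℂ := fun h i => Complex.exp (2 * (Real.pi:ℂ) * Complex.I * (h i : ℝ)) with hW
  set S : Finset (Fin k) := Finset.univ.erase ℓ₀ with hS
  -- choose a separating coordinate for each ℓ ≠ ℓ₀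
  have hex : ∀ ℓ : Fin k, ∃ i, ℓ ≠ ℓ₀ → g ℓ i ≠ g ℓ₀ i := by
    intro ℓ
    by_cases hne : ℓ = ℓ₀
    · exact ⟨⟨0, hd⟩, fun h => absurd hne h⟩
    · have : g ℓ ≠ g ℓ₀ := fun h => hne (hg h)
      obtain ⟨i, hi⟩ := Function.ne_iff.mp this
      exact ⟨i, fun _ => hi⟩
  choose iF hiF using hex
  -- the evaluation points
  have hScard : S.card = k - 1 := by
    rw [hS, Finset.card_erase_of_mem (Finset.mem_univ _), Finset.card_univ, Fintype.card_fin]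
  have hcard : ∀ (T : Finset (Fin k)) (i : Fin d), ((T ∩ S).filter (fun ℓ => iF ℓ = i)).card < N i := by
    intro T i
    calc ((T ∩ S).filter (fun ℓ => iF ℓ = i)).card ≤ (T ∩ S).card := Finset.card_filter_le _ _
      _ ≤ S.card := Finset.card_le_card (Finset.inter_subset_right)
      _ = k - 1 := hScard
      _ < k := Nat.sub_lt h1k one_pos
      _ ≤ N i := hk i
  set pt : Finset (Fin k) → (∀ i, Fin (N i)) := fun T i => ⟨((T ∩ S).filter (fun ℓ => iF ℓ = i)).card, hcard T i⟩ with hpt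
  -- the annihilating functional
  set L : ((∀ i, Fin (N i)) → ℂ) → ℂ :=
    fun h => ∑ T ∈ S.powerset, (∏ ℓ' ∈ S \ T, (-(W (g ℓ') (iF ℓ')))) * h (pt T) with hL
  -- evaluation of sinusoid at pt T
  have heval : ∀ (h : Fin d → ℝ) (T : Finset (Fin k)), T ⊆ S →
      sinusoid N h (pt T) = ∏ ℓ' ∈ T, W h (iF ℓ') := by
    intro h T hT
    rw [sinusoid_eq_pow]
    have hTS : T ∩ S = T := Finset.inter_eq_left.mpr hT
    have : ∀ i : Fin d, W h i ^ ((pt T i : ℕ)) = ∏ ℓ' ∈ T.filter (fun ℓ => iF ℓ = i), W h (iF ℓ') := by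
      intro i
      rw [Finset.prod_congr rfl (fun ℓ' hℓ' => by rw [(Finset.mem_filter.mp hℓ').2]),
        Finset.prod_const]
      congr 1
      simp [hpt, hTS]
    rw [Finset.prod_congr rfl (fun i _ => this i)]
    exact Finset.prod_fiberwise_of_maps_to (fun x _ => Finset.mem_univ _) _
  -- value of L on each sinusoid
  have hLval : ∀ ℓ : Fin k, L (sinusoid N (g ℓ))
      = ∏ ℓ' ∈ S, (W (g ℓ) (iF ℓ') + (-(W (g ℓ') (iF ℓ')))) := by
    intro ℓ
    rw [Finset.prod_add]
    refine Finset.sum_congr rfl fun T hT => ?_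
    rw [heval (g ℓ) T (Finset.mem_powerset.mp hT)]
    ring
  -- L is linear enough
  have hL0 : L (∑ ℓ, c ℓ • sinusoid N (g ℓ)) = ∑ ℓ, c ℓ * L (sinusoid N (g ℓ)) := by
    rw [hL]
    simp only [Finset.sum_apply, Pi.smul_apply, smul_eq_mul, Finset.mul_sum]
    rw [Finset.sum_comm]
    exact Finset.sum_congr rfl fun ℓ _ => Finset.sum_congr rfl fun T _ => by ring
  have hzero : (0:ℂ) = ∑ ℓ, c ℓ * L (sinusoid N (g ℓ)) := by
    rw [← hL0, hc]
    simp [hL]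
  -- all terms except ℓ₀ vanish
  have hvan : ∀ ℓ : Fin k, ℓ ≠ ℓ₀ → c ℓ * L (sinusoid N (g ℓ)) = 0 := by
    intro ℓ hne
    rw [hLval ℓ]
    have hmemS : ℓ ∈ S := Finset.mem_erase.mpr ⟨hne, Finset.mem_univ _⟩
    rw [Finset.prod_eq_zero hmemS (by ring), mul_zero]
  have hmain : c ℓ₀ * L (sinusoid N (g ℓ₀)) = 0 := by
    rw [Finset.sum_eq_single ℓ₀ (fun ℓ _ hne => hvan ℓ hne) (fun h => absurd (Finset.mem_univ _) h)] at hzero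
    exact hzero.symm
  rw [hLval ℓ₀] at hmain
  have hprod : ∏ ℓ' ∈ S, (W (g ℓ₀) (iF ℓ') + (-(W (g ℓ') (iF ℓ')))) ≠ 0 := by
    refine Finset.prod_ne_zero_iff.mpr fun ℓ' hℓ' => ?_
    have hne' : ℓ' ≠ ℓ₀ := (Finset.mem_erase.mp hℓ').1
    have : W (g ℓ₀) (iF ℓ') ≠ W (g ℓ') (iF ℓ') := by
      intro heq
      exact (hiF ℓ' hne') (exp_two_pi_inj (hmem ℓ' (iF ℓ')) (hmem ℓ₀ (iF ℓ')) heq.symm)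
    intro h0
    apply this
    have := add_eq_zero_iff_eq_neg.mp h0
    rw [this]; ring
  exact (mul_eq_zero.mp hmain).resolve_right hprod

lemma vmv_mv {n : Type*} [Fintype n] (a w u : n → ℂ) :
    Matrix.vecMulVec a w *ᵥ u = (w ⬝ᵥ u) • a := by
  ext i
  simp only [Matrix.mulVec, Matrix.vecMulVec_apply, dotProduct, Pi.smul_apply,
    smul_eq_mul, Finset.sum_mul]
  exact Finset.sum_congr rfl fun j _ => by ring

lemma sum_mulVec' {n : Type*} [Fintype n] {κ : Type*} (s : Finset κ)
    (A : κ → Matrix n n ℂ) (u : n → ℂ) :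
    (∑ ℓ ∈ s, A ℓ) *ᵥ u = ∑ ℓ ∈ s, A ℓ *ᵥ u := by
  ext i
  simp only [Matrix.mulVec, dotProduct, Finset.sum_apply, Finset.sum_mul,
    Matrix.sum_apply]
  exact Finset.sum_comm

lemma dot_sum' {n : Type*} [Fintype n] {κ : Type*} (s : Finset κ)
    (u : n → ℂ) (x : κ → n → ℂ) :
    u ⬝ᵥ (∑ ℓ ∈ s, x ℓ) = ∑ ℓ ∈ s, u ⬝ᵥ x ℓ := by
  simp only [dotProduct, Finset.sum_apply, Finset.mul_sum]
  exact Finset.sum_comm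

lemma dot_star_comm {n : Type*} [Fintype n] (a u : n → ℂ) :
    star u ⬝ᵥ a = starRingEnd ℂ (star a ⬝ᵥ u) := by
  simp only [dotProduct, map_sum, Pi.star_apply, RingHom.map_mul]
  exact Finset.sum_congr rfl fun j _ => by
    simp [Complex.conj_conj, mul_comm, Complex.star_def]

lemma quad_eval {n : Type*} [Fintype n] {κ : Type*} [Fintype κ]
    (v : κ → n → ℂ) (σ : κ → ℝ) (u : n → ℂ) :
    star u ⬝ᵥ ((∑ ℓ, (σ ℓ : ℂ) • Matrix.vecMulVec (v ℓ) (star (v ℓ))) *ᵥ u)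
      = ∑ ℓ, (σ ℓ : ℂ) * (starRingEnd ℂ (star (v ℓ) ⬝ᵥ u) * (star (v ℓ) ⬝ᵥ u)) := by
  rw [sum_mulVec', dot_sum']
  refine Finset.sum_congr rfl fun ℓ _ => ?_
  rw [Matrix.smul_mulVec, vmv_mv, ← dot_star_comm]
  simp only [dotProduct_smul, smul_eq_mul]
  ring

lemma key_orth {n : Type*} [Fintype n] {r r' : ℕ}
    (v : Fin r → n → ℂ) (v' : Fin r' → n → ℂ) (σ : Fin r → ℝ) (σ' : Fin r' → ℝ)
    (hσ' : ∀ m, 0 < σ' m)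
    (heq : ∑ ℓ, (σ ℓ : ℂ) • Matrix.vecMulVec (v ℓ) (star (v ℓ))
         = ∑ m, (σ' m : ℂ) • Matrix.vecMulVec (v' m) (star (v' m)))
    (u : n → ℂ) (hu : ∀ ℓ, star (v ℓ) ⬝ᵥ u = 0) : ∀ m, star (v' m) ⬝ᵥ u = 0 := by
  have h1 := congrArg (fun M => star u ⬝ᵥ (M *ᵥ u)) heq
  simp only [quad_eval] at h1
  have h2 : (0:ℂ) = ∑ m, (σ' m : ℂ) * (starRingEnd ℂ (star (v' m) ⬝ᵥ u) * (star (v' m) ⬝ᵥ u)) := by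
    rw [← h1]
    exact (Finset.sum_eq_zero fun ℓ _ => by rw [hu ℓ]; ring).symm
  have h3 : (0:ℂ) = ((∑ m, σ' m * Complex.normSq (star (v' m) ⬝ᵥ u) : ℝ) : ℂ) := by
    rw [h2]
    push_cast
    refine Finset.sum_congr rfl fun m _ => ?_
    rw [Complex.normSq_eq_conj_mul_self]
  have h4 : ∑ m, σ' m * Complex.normSq (star (v' m) ⬝ᵥ u) = 0 := by
    have := h3.symm
    exact_mod_cast this
  rw [Finset.sum_eq_zero_iff_of_nonneg (fun m _ =>
      mul_nonneg (le_of_lt (hσ' m)) (Complex.normSq_nonneg _))] at h4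
  intro m
  have hns : Complex.normSq (star (v' m) ⬝ᵥ u) = 0 := by
    rcases mul_eq_zero.mp (h4 m (Finset.mem_univ m)) with h | h
    · exact absurd h (ne_of_gt (hσ' m))
    · exact h
  exact Complex.normSq_eq_zero.mp hns

lemma mem_span_of_dot {n : Type*} [Fintype n] [DecidableEq n] {κ : Type*} [Fintype κ]
    (v : κ → n → ℂ) (w : n → ℂ)
    (h : ∀ u : n → ℂ, (∀ ℓ, star (v ℓ) ⬝ᵥ u = 0) → star w ⬝ᵥ u = 0) :
    w ∈ Submodule.span ℂ (Set.range v) := by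
  let e : (n → ℂ) ≃ₗ[ℂ] EuclideanSpace ℂ n := (WithLp.linearEquiv 2 ℂ (n → ℂ)).symm
  have hinner : ∀ a b : n → ℂ, (inner ℂ (e a) (e b) : ℂ) = star a ⬝ᵥ b := by
    intro a b
    simp [PiLp.inner_apply, RCLike.inner_apply, dotProduct, Complex.star_def, e,
      WithLp.linearEquiv, Pi.star_apply, mul_comm]
  let V : Submodule ℂ (EuclideanSpace ℂ n) := Submodule.span ℂ (Set.range fun ℓ => e (v ℓ))
  have hw : e w ∈ V := by
    rw [← Submodule.orthogonal_orthogonal V]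
    rw [Submodule.mem_orthogonal]
    intro u hu
    have hu' : ∀ ℓ, star (v ℓ) ⬝ᵥ (e.symm u) = 0 := by
      intro ℓ
      have hmem : e (v ℓ) ∈ V := Submodule.subset_span ⟨ℓ, rfl⟩
      have h1 : (inner ℂ (e (v ℓ)) u : ℂ) = 0 :=
        Submodule.inner_right_of_mem_orthogonal hmem hu
      have h2 := hinner (v ℓ) (e.symm u)
      rw [e.apply_symm_apply] at h2
      rw [← h2, h1]
    have h3 : star w ⬝ᵥ (e.symm u) = 0 := h _ hu'
    have h4 := hinner w (e.symm u)
    rw [e.apply_symm_apply] at h4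
    rw [inner_eq_zero_symm]
    rw [h4, h3]
  have hVmap : V = Submodule.map (e : (n → ℂ) →ₗ[ℂ] EuclideanSpace ℂ n)
      (Submodule.span ℂ (Set.range v)) := by
    rw [Submodule.map_span, ← Set.range_comp]
    rfl
  rw [hVmap, Submodule.mem_map] at hw
  obtain ⟨y, hy, hey⟩ := hw
  have : y = w := e.injective hey
  rwa [this] at hy


lemma snoc_inj {α : Type*} {k : ℕ} {f : Fin k → α} {x : α}
    (hf : Function.Injective f) (hx : ∀ ℓ, f ℓ ≠ x) :
    Function.Injective (Fin.snoc f x : Fin (k+1) → α) := by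
  intro a b hab
  induction a using Fin.lastCases with
  | last =>
    induction b using Fin.lastCases with
    | last => rfl
    | cast j => simp only [Fin.snoc_last, Fin.snoc_castSucc] at hab; exact absurd hab.symm (hx j)
  | cast i =>
    induction b using Fin.lastCases with
    | last => simp only [Fin.snoc_last, Fin.snoc_castSucc] at hab; exact absurd hab (hx i)
    | cast j => simp only [Fin.snoc_castSucc] at hab; exact congrArg Fin.castSucc (hf hab)

/-- Uniqueness of the MD Vandermonde decomposition: two decompositions of the same
matrix with fewer than `min_i N_i` atoms coincide up to a permutation. -/
theorem stmt1 {d : ℕ} (hd : 1 ≤ d) (N : Fin d → ℕ) (hN : ∀ i, 2 ≤ N i)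
    (r r' : ℕ) (hr : ∀ i, r < N i) (hr' : ∀ i, r' < N i)
    (f : Fin r → (Fin d → ℝ)) (f' : Fin r' → (Fin d → ℝ))
    (hfinj : Function.Injective f) (hfinj' : Function.Injective f')
    (hfmem : ∀ ℓ i, f ℓ i ∈ Set.Ico (0 : ℝ) 1)
    (hfmem' : ∀ ℓ i, f' ℓ i ∈ Set.Ico (0 : ℝ) 1)
    (σ : Fin r → ℝ) (σ' : Fin r' → ℝ)
    (hσ : ∀ ℓ, 0 < σ ℓ) (hσ' : ∀ ℓ, 0 < σ' ℓ)
    (heq : ∑ ℓ, (σ ℓ : ℂ) • Matrix.vecMulVec (sinusoid N (f ℓ)) (star (sinusoid N (f ℓ)))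
         = ∑ ℓ, (σ' ℓ : ℂ) • Matrix.vecMulVec (sinusoid N (f' ℓ)) (star (sinusoid N (f' ℓ)))) :
    r = r' ∧ ∃ e : Fin r ≃ Fin r', ∀ ℓ, f' (e ℓ) = f ℓ ∧ σ' (e ℓ) = σ ℓ := by
  classical
  set v : Fin r → (∀ i, Fin (N i)) → ℂ := fun ℓ => sinusoid N (f ℓ) with hv
  set v' : Fin r' → (∀ i, Fin (N i)) → ℂ := fun m => sinusoid N (f' m) with hv'
  -- Step A: annihilators of one family annihilate the other
  have hA : ∀ u, (∀ ℓ, star (v ℓ) ⬝ᵥ u = 0) → ∀ m, star (v' m) ⬝ᵥ u = 0 :=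
    fun u hu => key_orth v v' σ σ' hσ' heq u hu
  have hA' : ∀ u, (∀ m, star (v' m) ⬝ᵥ u = 0) → ∀ ℓ, star (v ℓ) ⬝ᵥ u = 0 :=
    fun u hu => key_orth v' v σ' σ hσ heq.symm u hu
  -- Step B: span membership
  have hspan : ∀ m, v' m ∈ Submodule.span ℂ (Set.range v) :=
    fun m => mem_span_of_dot v (v' m) (fun u hu => hA u hu m)
  have hspan' : ∀ ℓ, v ℓ ∈ Submodule.span ℂ (Set.range v') :=
    fun ℓ => mem_span_of_dot v' (v ℓ) (fun u hu => hA' u hu ℓ)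
  -- Step C: frequencies match
  have hmatch : ∀ {k k' : ℕ} (g : Fin k → Fin d → ℝ) (g' : Fin k' → Fin d → ℝ),
      (∀ i, k < N i) →
      Function.Injective g → (∀ ℓ i, g ℓ i ∈ Set.Ico (0:ℝ) 1) →
      (∀ ℓ i, g' ℓ i ∈ Set.Ico (0:ℝ) 1) →
      (∀ m, sinusoid N (g' m) ∈ Submodule.span ℂ (Set.range fun ℓ => sinusoid N (g ℓ))) →
      ∀ m, ∃ ℓ, g ℓ = g' m := by
    intro k k' g g' hk hginj hgmem hgmem' hsp m
    by_contra hcon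
    push_neg at hcon
    have hGinj : Function.Injective (Fin.snoc g (g' m) : Fin (k+1) → (Fin d → ℝ)) :=
      snoc_inj hginj hcon
    have hGmem : ∀ ℓ i, (Fin.snoc g (g' m) : Fin (k+1) → (Fin d → ℝ)) ℓ i ∈ Set.Ico (0:ℝ) 1 := by
      intro ℓ i
      induction ℓ using Fin.lastCases with
      | last => simpa [Fin.snoc_last] using hgmem' m i
      | cast j => simpa [Fin.snoc_castSucc] using hgmem j i
    have hli := sinusoid_li hd N (fun i => Nat.succ_le_of_lt (hk i))
      (Fin.snoc g (g' m)) hGinj hGmem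
    have hfam : (fun ℓ => sinusoid N ((Fin.snoc g (g' m) : Fin (k+1) → (Fin d → ℝ)) ℓ))
        = Fin.snoc (fun ℓ => sinusoid N (g ℓ)) (sinusoid N (g' m)) := by
      funext ℓ
      induction ℓ using Fin.lastCases with
      | last => simp [Fin.snoc_last]
      | cast j => simp [Fin.snoc_castSucc]
    rw [hfam, linearIndependent_fin_snoc] at hli
    exact hli.2 (hsp m)
  have hC1 : ∀ m, ∃ ℓ, f ℓ = f' m :=
    hmatch f f' hr hfinj hfmem hfmem' hspan
  have hC2 : ∀ ℓ, ∃ m, f' m = f ℓ :=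
    hmatch f' f hr' hfinj' hfmem' hfmem hspan'
  choose φ hφ using hC1
  choose ψ hψ using hC2
  have hleft : ∀ ℓ, φ (ψ ℓ) = ℓ := fun ℓ => hfinj (by rw [hφ (ψ ℓ), hψ ℓ])
  have hright : ∀ m, ψ (φ m) = m := fun m => hfinj' (by rw [hψ (φ m), hφ m])
  set e : Fin r ≃ Fin r' := ⟨ψ, φ, hleft, hright⟩ with he
  have hcard : r = r' := by
    have := Fintype.card_congr e
    simpa using this
  -- Step E: weights match
  have hveq : ∀ ℓ, v' (e ℓ) = v ℓ := by
    intro ℓ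
    show sinusoid N (f' (ψ ℓ)) = sinusoid N (f ℓ)
    rw [hψ ℓ]
  have hre : ∑ m, (σ' m : ℂ) • Matrix.vecMulVec (v' m) (star (v' m))
      = ∑ ℓ, (σ' (e ℓ) : ℂ) • Matrix.vecMulVec (v ℓ) (star (v ℓ)) := by
    rw [← Equiv.sum_comp e (fun m => (σ' m : ℂ) • Matrix.vecMulVec (v' m) (star (v' m)))]
    exact Finset.sum_congr rfl fun ℓ _ => by rw [hveq ℓ]
  have heq2 : ∑ ℓ, (((σ ℓ : ℂ) - (σ' (e ℓ) : ℂ)) • Matrix.vecMulVec (v ℓ) (star (v ℓ)))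
      = 0 := by
    have h1 : ∑ ℓ, (σ ℓ : ℂ) • Matrix.vecMulVec (v ℓ) (star (v ℓ))
        = ∑ ℓ, (σ' (e ℓ) : ℂ) • Matrix.vecMulVec (v ℓ) (star (v ℓ)) := heq.trans hre
    rw [← sub_eq_zero] at h1
    rw [← h1, ← Finset.sum_sub_distrib]
    exact Finset.sum_congr rfl fun ℓ _ => by rw [sub_smul]
  have hli : LinearIndependent ℂ v :=
    sinusoid_li hd N (fun i => le_of_lt (hr i)) f hfinj hfmem
  have hσeq : ∀ ℓ, σ' (e ℓ) = σ ℓ := by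
    intro ℓ₀
    have h6 := congrArg (fun M => M *ᵥ (v ℓ₀)) heq2
    simp only [Matrix.zero_mulVec] at h6
    rw [sum_mulVec'] at h6
    have h7 : ∑ ℓ, ((((σ ℓ : ℂ) - (σ' (e ℓ) : ℂ)) * (star (v ℓ) ⬝ᵥ v ℓ₀)) • v ℓ) = 0 := by
      rw [← h6]
      refine Finset.sum_congr rfl fun ℓ _ => ?_
      rw [Matrix.smul_mulVec, vmv_mv, smul_smul]
    have h8 := Fintype.linearIndependent_iff.mp hli _ h7 ℓ₀
    have hdot : star (v ℓ₀) ⬝ᵥ v ℓ₀ ≠ 0 := by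
      have hform : star (v ℓ₀) ⬝ᵥ v ℓ₀ = ((∑ m, Complex.normSq (v ℓ₀ m) : ℝ) : ℂ) := by
        push_cast
        refine Finset.sum_congr rfl fun m _ => ?_
        rw [Pi.star_apply, Complex.star_def, ← Complex.normSq_eq_conj_mul_self]
      rw [hform]
      simp only [ne_eq, Complex.ofReal_eq_zero]
      have hne : Nonempty (∀ i, Fin (N i)) :=
        ⟨fun i => ⟨0, lt_of_lt_of_le (by norm_num) (hN i)⟩⟩
      have hpos : 0 < ∑ m, Complex.normSq (v ℓ₀ m) := by
        refine Finset.sum_pos (fun m _ => ?_) Finset.univ_nonempty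
        refine Complex.normSq_pos.mpr ?_
        show sinusoid N (f ℓ₀) m ≠ 0
        unfold sinusoid
        exact Finset.prod_ne_zero_iff.mpr fun i _ => Complex.exp_ne_zero _
      exact ne_of_gt hpos
    have h9 : ((σ ℓ₀ : ℂ) - (σ' (e ℓ₀) : ℂ)) = 0 := by
      rcases mul_eq_zero.mp h8 with h | h
      · exact h
      · exact absurd h hdot
    have : (σ ℓ₀ : ℂ) = (σ' (e ℓ₀) : ℂ) := sub_eq_zero.mp h9
    exact_mod_cast this.symm
  exact ⟨hcard, e, fun ℓ => ⟨hψ ℓ, hσeq ℓ⟩⟩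
end

section
/- Let 0 ≤ f_{L,i} < f_{H,i} < 1 for i = 1,...,d and let g_i be the trigonometric polynomial with coefficients r_{0,i} = -2cos(π(f_{H,i} - f_{L,i})) and r_{1,i} = e^{iπ(f_{L,i} + f_{H,i})}. Let r ≥ 1, let σ_1,...,σ_r be positive reals, and let f_1,...,f_r ∈ ℝ^d satisfy f_{i,ℓ} ∈ [f_{L,i}, f_{H,i}] for all i and ℓ. Define B : ℤ^d → ℂ by B(p) = ∑_{ℓ=1}^{r} σ_ℓ ∏_{i=1}^{d} e^{2πi p_i f_{i,ℓ}}. Then T(B) = ∑_{ℓ=1}^{r} σ_ℓ a(f_ℓ) a(f_ℓ)ᴴ is positive semidefinite, and each filtered matrix T_{g_i}(B), i = 1,...,d, is positive semidefinite. -/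
open Complex Matrix BigOperators
open scoped ComplexOrder

lemma aux_psd_smul {ι : Type*} [Fintype ι] (v : ι → ℂ) (c : ℝ) (hc : 0 ≤ c) :
    ((c : ℂ) • Matrix.vecMulVec v (star v)).PosSemidef := by
  refine Matrix.PosSemidef.of_dotProduct_mulVec_nonneg ?_ ?_
  · ext i j
    simp only [Matrix.conjTranspose_apply, Matrix.smul_apply, Matrix.vecMulVec_apply,
      Pi.star_apply, star_smul, star_mul', star_star, Complex.star_def, Complex.conj_ofReal,
      smul_eq_mul, Complex.conj_conj]
    ring
  · intro x
    have key : star x ⬝ᵥ (Matrix.vecMulVec v (star v)) *ᵥ x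
        = star (star v ⬝ᵥ x) * (star v ⬝ᵥ x) := by
      simp only [dotProduct, Matrix.mulVec, Matrix.vecMulVec_apply, Pi.star_apply,
        star_sum, star_mul', star_star, Finset.sum_mul, Finset.mul_sum]
      rw [Finset.sum_comm]
      exact Finset.sum_congr rfl fun i _ => Finset.sum_congr rfl fun j _ => by ring
    rw [Matrix.smul_mulVec, dotProduct_smul, key, smul_eq_mul]
    have h1 := star_mul_self_nonneg (star v ⬝ᵥ x)
    have h2 : (0:ℂ) ≤ (c:ℂ) := by exact_mod_cast hc
    exact mul_nonneg h2 h1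

lemma aux_psd_sum {ι n : Type*} [Fintype n] (s : Finset ι) (M : ι → Matrix n n ℂ)
    (h : ∀ i ∈ s, (M i).PosSemidef) : (∑ i ∈ s, M i).PosSemidef := by
  classical
  induction s using Finset.induction_on with
  | empty => simpa using Matrix.PosSemidef.zero
  | insert _ _ hx ih =>
    rw [Finset.sum_insert hx]
    exact (h _ (Finset.mem_insert_self _ _)).add
      (ih fun i hi => h i (Finset.mem_insert_of_mem hi))

lemma aux_exp_split (a b : ℤ) (t : ℝ) :
    Complex.exp (2 * (Real.pi : ℂ) * Complex.I * ((a : ℤ) : ℂ) * (t : ℂ)) *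
      star (Complex.exp (2 * (Real.pi : ℂ) * Complex.I * ((b : ℤ) : ℂ) * (t : ℂ)))
      = Complex.exp (2 * (Real.pi : ℂ) * Complex.I * (((a - b : ℤ)) : ℂ) * (t : ℂ)) := by
  have h : star (Complex.exp (2 * (Real.pi:ℂ) * Complex.I * ((b:ℤ):ℂ) * (t:ℂ)))
      = Complex.exp (-(2 * (Real.pi:ℂ) * Complex.I * ((b:ℤ):ℂ) * (t:ℂ))) := by
    rw [Complex.star_def, ← Complex.exp_conj]
    congr 1
    simp only [_root_.map_mul, map_neg, Complex.conj_I, Complex.conj_ofReal, map_ofNat, map_intCast]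
    ring
  rw [h, ← Complex.exp_add]
  congr 1
  push_cast
  ring

lemma aux_prod_split {d : ℕ} (t : Fin d → ℝ) (a b : Fin d → ℤ) :
    (∏ i, Complex.exp (2 * (Real.pi : ℂ) * Complex.I * (((a i - b i : ℤ)) : ℂ) * ((t i : ℝ) : ℂ)))
    = (∏ i, Complex.exp (2 * (Real.pi : ℂ) * Complex.I * ((a i : ℤ) : ℂ) * ((t i : ℝ) : ℂ))) *
      star (∏ i, Complex.exp (2 * (Real.pi : ℂ) * Complex.I * ((b i : ℤ) : ℂ) * ((t i : ℝ) : ℂ))) := by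
  rw [star_prod, ← Finset.prod_mul_distrib]
  exact Finset.prod_congr rfl fun i _ => (aux_exp_split (a i) (b i) (t i)).symm

lemma aux_prod_shift_pos {d : ℕ} (t : Fin d → ℝ) (a : Fin d → ℤ) (i0 : Fin d) :
    (∏ i, Complex.exp (2 * (Real.pi:ℂ) * Complex.I *
        (((a i + if i = i0 then 1 else 0 : ℤ)) : ℂ) * ((t i : ℝ) : ℂ)))
    = (∏ i, Complex.exp (2 * (Real.pi:ℂ) * Complex.I * ((a i : ℤ) : ℂ) * ((t i : ℝ) : ℂ)))
      * Complex.exp (2 * (Real.pi:ℂ) * Complex.I * ((t i0 : ℝ) : ℂ)) := by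
  have step : ∀ i, Complex.exp (2 * (Real.pi:ℂ) * Complex.I *
        (((a i + if i = i0 then 1 else 0 : ℤ)) : ℂ) * ((t i : ℝ) : ℂ))
      = Complex.exp (2 * (Real.pi:ℂ) * Complex.I * ((a i : ℤ) : ℂ) * ((t i : ℝ) : ℂ)) *
        (if i = i0 then Complex.exp (2 * (Real.pi:ℂ) * Complex.I * ((t i : ℝ) : ℂ)) else 1) := by
    intro i
    split_ifs with h
    · rw [← Complex.exp_add]; congr 1; push_cast; ring
    · simp
  rw [Finset.prod_congr rfl (fun i _ => step i), Finset.prod_mul_distrib,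
    Finset.prod_ite_eq' Finset.univ i0, if_pos (Finset.mem_univ i0)]

lemma aux_prod_shift_neg {d : ℕ} (t : Fin d → ℝ) (a : Fin d → ℤ) (i0 : Fin d) :
    (∏ i, Complex.exp (2 * (Real.pi:ℂ) * Complex.I *
        (((a i - if i = i0 then 1 else 0 : ℤ)) : ℂ) * ((t i : ℝ) : ℂ)))
    = (∏ i, Complex.exp (2 * (Real.pi:ℂ) * Complex.I * ((a i : ℤ) : ℂ) * ((t i : ℝ) : ℂ)))
      * Complex.exp (-(2 * (Real.pi:ℂ) * Complex.I * ((t i0 : ℝ) : ℂ))) := by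
  have step : ∀ i, Complex.exp (2 * (Real.pi:ℂ) * Complex.I *
        (((a i - if i = i0 then 1 else 0 : ℤ)) : ℂ) * ((t i : ℝ) : ℂ))
      = Complex.exp (2 * (Real.pi:ℂ) * Complex.I * ((a i : ℤ) : ℂ) * ((t i : ℝ) : ℂ)) *
        (if i = i0 then Complex.exp (-(2 * (Real.pi:ℂ) * Complex.I * ((t i : ℝ) : ℂ))) else 1) := by
    intro i
    split_ifs with h
    · rw [← Complex.exp_add]; congr 1; push_cast; ring
    · simp
  rw [Finset.prod_congr rfl (fun i _ => step i), Finset.prod_mul_distrib,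
    Finset.prod_ite_eq' Finset.univ i0, if_pos (Finset.mem_univ i0)]

lemma aux_gval (fl fh x : ℝ) :
    (starRingEnd ℂ) (Complex.exp ((Real.pi:ℂ) * Complex.I * ((fl:ℂ) + (fh:ℂ)))) *
        Complex.exp (2 * (Real.pi:ℂ) * Complex.I * ((x:ℝ) : ℂ)) +
      ((-2 * Real.cos (Real.pi * (fh - fl)) : ℝ) : ℂ) +
      Complex.exp ((Real.pi:ℂ) * Complex.I * ((fl:ℂ) + (fh:ℂ))) *
        Complex.exp (-(2 * (Real.pi:ℂ) * Complex.I * ((x:ℝ) : ℂ)))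
    = ((2 * Real.cos (Real.pi * (2*x - fl - fh)) - 2 * Real.cos (Real.pi * (fh - fl)) : ℝ) : ℂ) := by
  have hconj : (starRingEnd ℂ) (Complex.exp ((Real.pi:ℂ) * Complex.I * ((fl:ℂ) + (fh:ℂ))))
      = Complex.exp (-((Real.pi:ℂ) * Complex.I * ((fl:ℂ) + (fh:ℂ)))) := by
    rw [← Complex.exp_conj]
    congr 1
    simp only [_root_.map_mul, map_add, map_neg, Complex.conj_I, Complex.conj_ofReal]
    ring
  rw [hconj, ← Complex.exp_add, ← Complex.exp_add]
  push_cast [Complex.ofReal_cos]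
  rw [Complex.cos, Complex.cos]
  ring_nf
/-- The filtered matrix `T_{g_i}(B)(m,n) = ∑_{k=-1}^1 r_k B(m-n-k e_i)`,
with `r_{-1} = conj r_1`, indexed by `Ī = ∏ i {0,…,N_i-2}`. -/
noncomputable def toepTg {d : ℕ} (N : Fin d → ℕ) (i0 : Fin d) (r0 : ℝ) (r1 : ℂ)
    (B : (Fin d → ℤ) → ℂ) :
    Matrix (∀ i, Fin (N i - 1)) (∀ i, Fin (N i - 1)) ℂ :=
  Matrix.of fun m n =>
    (starRingEnd ℂ) r1 * B (fun i => (m i : ℤ) - (n i : ℤ) + (if i = i0 then 1 else 0)) +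
    (r0 : ℂ) * B (fun i => (m i : ℤ) - (n i : ℤ)) +
    r1 * B (fun i => (m i : ℤ) - (n i : ℤ) - (if i = i0 then 1 else 0))

/-- If `B(p) = ∑ ℓ σ_ℓ ∏ i e^{2πi p_i f_{i,ℓ}}` with `σ_ℓ > 0` and
`f_{i,ℓ} ∈ [f_{L,i}, f_{H,i}]`, then `T(B) = ∑ ℓ σ_ℓ a(f_ℓ) a(f_ℓ)ᴴ` is PSD and
every filtered matrix `T_{g_i}(B)` is PSD, where `g_i` has coefficients
`r_{0,i} = -2cos(π(f_{H,i}-f_{L,i}))`, `r_{1,i} = e^{iπ(f_{L,i}+f_{H,i})}`. -/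
theorem stmt5 {d : ℕ} (hd : 1 ≤ d) (N : Fin d → ℕ) (hN : ∀ i, 2 ≤ N i)
    (fL fH : Fin d → ℝ) (hL0 : ∀ i, 0 ≤ fL i) (hLH : ∀ i, fL i < fH i)
    (hH1 : ∀ i, fH i < 1)
    (r : ℕ) (hr : 1 ≤ r) (σ : Fin r → ℝ) (hσ : ∀ ℓ, 0 < σ ℓ)
    (f : Fin r → Fin d → ℝ) (hf : ∀ ℓ i, f ℓ i ∈ Set.Icc (fL i) (fH i))
    (B : (Fin d → ℤ) → ℂ)
    (hB : ∀ p : Fin d → ℤ, B p = ∑ ℓ, (σ ℓ : ℂ) *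
      ∏ i, Complex.exp (2 * (Real.pi : ℂ) * Complex.I * ((p i : ℤ) : ℂ) * ((f ℓ i : ℝ) : ℂ))) :
    toepT N B = ∑ ℓ, (σ ℓ : ℂ) •
        Matrix.vecMulVec (sinusoid N (f ℓ)) (star (sinusoid N (f ℓ))) ∧
    (toepT N B).PosSemidef ∧
    ∀ i, (toepTg N i (-2 * Real.cos (Real.pi * (fH i - fL i)))
        (Complex.exp ((Real.pi : ℂ) * Complex.I * ((fL i : ℂ) + (fH i : ℂ)))) B).PosSemidef := by
  classical
  have hc : ∀ ℓ, (0:ℝ) ≤ σ ℓ := fun ℓ => (hσ ℓ).le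
  have h1 : toepT N B = ∑ ℓ, (σ ℓ : ℂ) •
      Matrix.vecMulVec (sinusoid N (f ℓ)) (star (sinusoid N (f ℓ))) := by
    ext m n
    simp only [toepT, Matrix.of_apply, hB, Matrix.sum_apply, Matrix.smul_apply,
      Matrix.vecMulVec_apply, sinusoid, Pi.star_apply, smul_eq_mul]
    refine Finset.sum_congr rfl fun ℓ _ => ?_
    congr 1
    rw [aux_prod_split (f ℓ) (fun i => (m i : ℤ)) (fun i => (n i : ℤ))]
    push_cast
    rfl
  refine ⟨h1, ?_, ?_⟩
  · rw [h1]
    exact aux_psd_sum _ _ fun ℓ _ => aux_psd_smul _ _ (hc ℓ)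
  · intro i0
    set g : Fin r → ℝ := fun ℓ =>
      2 * Real.cos (Real.pi * (2 * f ℓ i0 - fL i0 - fH i0)) -
        2 * Real.cos (Real.pi * (fH i0 - fL i0)) with hgdef
    have hg : ∀ ℓ, 0 ≤ g ℓ := by
      intro ℓ
      have hpi := Real.pi_pos
      obtain ⟨hfl, hfh⟩ := hf ℓ i0
      have habs : |Real.pi * (2 * f ℓ i0 - fL i0 - fH i0)| ≤ Real.pi * (fH i0 - fL i0) := by
        rw [abs_le]
        constructor <;> nlinarith [hLH i0]
      have hy : Real.pi * (fH i0 - fL i0) ≤ Real.pi := by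
        nlinarith [hH1 i0, hL0 i0]
      have := Real.cos_le_cos_of_nonneg_of_le_pi (abs_nonneg _) hy habs
      rw [Real.cos_abs] at this
      simp only [hgdef]
      linarith
    set w : Fin r → (∀ i, Fin (N i - 1)) → ℂ := fun ℓ m =>
      ∏ i, Complex.exp (2 * (Real.pi : ℂ) * Complex.I * ((m i : ℕ) : ℂ) * ((f ℓ i : ℝ) : ℂ))
      with hwdef
    have hEq : toepTg N i0 (-2 * Real.cos (Real.pi * (fH i0 - fL i0)))
        (Complex.exp ((Real.pi : ℂ) * Complex.I * ((fL i0 : ℂ) + (fH i0 : ℂ)))) B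
        = ∑ ℓ, ((σ ℓ * g ℓ : ℝ) : ℂ) • Matrix.vecMulVec (w ℓ) (star (w ℓ)) := by
      ext m n
      simp only [toepTg, Matrix.of_apply, hB, Matrix.sum_apply, Matrix.smul_apply,
        Matrix.vecMulVec_apply, Pi.star_apply, smul_eq_mul]
      simp only [aux_prod_shift_pos (f _) (fun i => (m i : ℤ) - (n i : ℤ)) i0,
        aux_prod_shift_neg (f _) (fun i => (m i : ℤ) - (n i : ℤ)) i0]
      rw [Finset.mul_sum, Finset.mul_sum, Finset.mul_sum, ← Finset.sum_add_distrib,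
        ← Finset.sum_add_distrib]
      refine Finset.sum_congr rfl fun ℓ _ => ?_
      have hP : (∏ i, Complex.exp (2 * (Real.pi:ℂ) * Complex.I *
            ((((m i : ℤ) - (n i : ℤ) : ℤ)) : ℂ) * ((f ℓ i : ℝ) : ℂ)))
          = w ℓ m * star (w ℓ n) := by
        rw [aux_prod_split (f ℓ) (fun i => (m i : ℤ)) (fun i => (n i : ℤ))]
        simp only [hwdef]
        push_cast
        rfl
      rw [hP, show ((σ ℓ * g ℓ : ℝ) : ℂ)
          = ((starRingEnd ℂ) (Complex.exp ((Real.pi:ℂ) * Complex.I * ((fL i0 : ℂ) + (fH i0 : ℂ)))) *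
              Complex.exp (2 * (Real.pi:ℂ) * Complex.I * ((f ℓ i0 : ℝ) : ℂ)) +
              ((-2 * Real.cos (Real.pi * (fH i0 - fL i0)) : ℝ) : ℂ) +
              Complex.exp ((Real.pi:ℂ) * Complex.I * ((fL i0 : ℂ) + (fH i0 : ℂ))) *
              Complex.exp (-(2 * (Real.pi:ℂ) * Complex.I * ((f ℓ i0 : ℝ) : ℂ)))) * (σ ℓ : ℂ) from by
            rw [aux_gval (fL i0) (fH i0) (f ℓ i0)]
            simp only [hgdef]
            push_cast
            ring]
      ring
    rw [hEq]
    exact aux_psd_sum _ _ fun ℓ _ => aux_psd_smul _ _ (mul_nonneg (hc ℓ) (hg ℓ))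
end

section
/- Let σ_1,...,σ_r ∈ ℂ and f_1,...,f_r ∈ ℝ^d, and define B : ℤ^d → ℂ by B(p) = ∑_{ℓ=1}^{r} σ_ℓ ∏_{j=1}^{d} e^{2πi p_j f_{j,ℓ}}. Then for each coordinate i and all m, n ∈ Ī, T_{g_i}(B)(m,n) = ∑_{ℓ=1}^{r} σ_ℓ g_i(f_{i,ℓ}) ∏_{j=1}^{d} e^{2πi (m_j - n_j) f_{j,ℓ}}, where g_i(f) = r_{0,i} + 2Re(r_{1,i} e^{-2πi f}). Equivalently, T_{g_i}(B) = Ā · diag(σ_1 g_i(f_{i,1}), ..., σ_r g_i(f_{i,r})) · Āᴴ, where Ā is the matrix whose ℓ-th column is ā(f_ℓ) ∈ ℂ^{Ī} with ā(f_ℓ)(m) = ∏_{j=1}^{d} e^{2πi m_j f_{j,ℓ}}. -/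
open Complex Matrix BigOperators
open scoped ComplexOrder

/-- The degree-one Hermitian trigonometric polynomial `g(f) = r_0 + 2 Re(r_1 e^{-2πi f})`. -/
noncomputable def gval (r0 : ℝ) (r1 : ℂ) (f : ℝ) : ℝ :=
  r0 + 2 * (r1 * Complex.exp (-(2 * (Real.pi : ℂ) * Complex.I * (f : ℂ)))).re
private lemma prod_shift {d : ℕ} (q : Fin d → ℤ) (f : Fin d → ℝ) (i0 : Fin d) (c : ℤ) :
    ∏ j, Complex.exp (2 * (Real.pi : ℂ) * Complex.I *
        (((q j + if j = i0 then c else 0 : ℤ)) : ℂ) * ((f j : ℝ) : ℂ))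
      = Complex.exp (2 * (Real.pi : ℂ) * Complex.I * (c : ℂ) * ((f i0 : ℝ) : ℂ)) *
        ∏ j, Complex.exp (2 * (Real.pi : ℂ) * Complex.I * ((q j : ℤ) : ℂ) * ((f j : ℝ) : ℂ)) := by
  have h : ∀ j : Fin d, Complex.exp (2 * (Real.pi : ℂ) * Complex.I *
        (((q j + if j = i0 then c else 0 : ℤ)) : ℂ) * ((f j : ℝ) : ℂ))
      = Complex.exp (2 * (Real.pi : ℂ) * Complex.I * ((q j : ℤ) : ℂ) * ((f j : ℝ) : ℂ)) *
        Complex.exp (2 * (Real.pi : ℂ) * Complex.I * (((if j = i0 then c else 0 : ℤ)) : ℂ) * ((f j : ℝ) : ℂ)) := by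
    intro j
    rw [← Complex.exp_add]
    push_cast
    ring_nf
  rw [Finset.prod_congr rfl (fun j _ => h j), Finset.prod_mul_distrib, mul_comm]
  congr 1
  rw [Finset.prod_eq_single i0]
  · simp
  · intro j _ hj
    simp [hj]
  · simp

/-- For `B(p) = ∑ ℓ σ_ℓ ∏ j e^{2πi p_j f_{j,ℓ}}`, the filtered matrix satisfies
`T_{g_i}(B)(m,n) = ∑ ℓ σ_ℓ g_i(f_{i,ℓ}) ∏ j e^{2πi (m_j-n_j) f_{j,ℓ}}`, i.e.
`T_{g_i}(B) = Ā diag(σ_ℓ g_i(f_{i,ℓ})) Āᴴ`. -/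
theorem stmt7 {d : ℕ} (hd : 1 ≤ d) (N : Fin d → ℕ) (hN : ∀ i, 2 ≤ N i)
    (r : ℕ) (σ : Fin r → ℂ) (f : Fin r → Fin d → ℝ)
    (r0 : Fin d → ℝ) (r1 : Fin d → ℂ)
    (B : (Fin d → ℤ) → ℂ)
    (hB : ∀ p : Fin d → ℤ, B p = ∑ ℓ, σ ℓ *
      ∏ j, Complex.exp (2 * (Real.pi : ℂ) * Complex.I * ((p j : ℤ) : ℂ) * ((f ℓ j : ℝ) : ℂ))) :
    ∀ i : Fin d,
      (∀ m n : ∀ j, Fin (N j - 1),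
        toepTg N i (r0 i) (r1 i) B m n
          = ∑ ℓ, σ ℓ * ((gval (r0 i) (r1 i) (f ℓ i) : ℝ) : ℂ) *
              ∏ j, Complex.exp (2 * (Real.pi : ℂ) * Complex.I *
                (((m j : ℤ) - (n j : ℤ) : ℤ) : ℂ) * ((f ℓ j : ℝ) : ℂ))) ∧
      toepTg N i (r0 i) (r1 i) B
        = ∑ ℓ, (σ ℓ * ((gval (r0 i) (r1 i) (f ℓ i) : ℝ) : ℂ)) •
            Matrix.vecMulVec (sinusoid (fun j => N j - 1) (f ℓ))
              (star (sinusoid (fun j => N j - 1) (f ℓ))) := by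
  intro i
  have key : ∀ m n : ∀ j, Fin (N j - 1),
      toepTg N i (r0 i) (r1 i) B m n
        = ∑ ℓ, σ ℓ * ((gval (r0 i) (r1 i) (f ℓ i) : ℝ) : ℂ) *
            ∏ j, Complex.exp (2 * (Real.pi : ℂ) * Complex.I *
              (((m j : ℤ) - (n j : ℤ) : ℤ) : ℂ) * ((f ℓ j : ℝ) : ℂ)) := by
    intro m n
    simp only [toepTg, Matrix.of_apply, hB]
    rw [Finset.mul_sum, Finset.mul_sum, Finset.mul_sum, ← Finset.sum_add_distrib,
      ← Finset.sum_add_distrib]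
    refine Finset.sum_congr rfl fun ℓ _ => ?_
    have h1 := prod_shift (fun j => (m j : ℤ) - (n j : ℤ)) (f ℓ) i 1
    have h2 := prod_shift (fun j => (m j : ℤ) - (n j : ℤ)) (f ℓ) i (-1)
    simp only [sub_eq_add_neg] at *
    have hneg : ∀ j : Fin d, ((m j : ℤ) + -(n j : ℤ) + -(if j = i then (1:ℤ) else 0))
        = ((m j : ℤ) + -(n j : ℤ) + (if j = i then (-1:ℤ) else 0)) := fun j => by
      split <;> ring
    simp only [hneg]
    push_cast at h1 h2 ⊢
    rw [h1, h2]
    set E := ∏ j, Complex.exp (2 * (Real.pi : ℂ) * Complex.I *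
          (((m j : ℕ) : ℂ) + -((n j : ℕ) : ℂ)) * ((f ℓ j : ℝ) : ℂ))
    have hg : ((gval (r0 i) (r1 i) (f ℓ i) : ℝ) : ℂ)
        = (r0 i : ℂ) + r1 i * Complex.exp (2 * (Real.pi : ℂ) * Complex.I * (-1 : ℂ) * ((f ℓ i : ℝ) : ℂ))
          + (starRingEnd ℂ) (r1 i) * Complex.exp (2 * (Real.pi : ℂ) * Complex.I * (1 : ℂ) * ((f ℓ i : ℝ) : ℂ)) := by
      unfold gval
      push_cast
      rw [show ((2:ℂ) * ((r1 i * Complex.exp (-(2 * (Real.pi:ℂ) * Complex.I * ((f ℓ i : ℝ):ℂ)))).re : ℝ))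
          = (r1 i * Complex.exp (-(2 * (Real.pi:ℂ) * Complex.I * ((f ℓ i : ℝ):ℂ))))
            + (starRingEnd ℂ) (r1 i * Complex.exp (-(2 * (Real.pi:ℂ) * Complex.I * ((f ℓ i : ℝ):ℂ)))) from ?_]
      · rw [_root_.map_mul, ← Complex.exp_conj]
        have hc : (starRingEnd ℂ) (-(2 * (Real.pi:ℂ) * Complex.I * ((f ℓ i : ℝ):ℂ)))
            = 2 * (Real.pi:ℂ) * Complex.I * ((f ℓ i : ℝ):ℂ) := by
          simp [_root_.map_mul, map_ofNat, Complex.conj_ofReal, Complex.conj_I]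
        rw [hc,
          show (2*(Real.pi:ℂ)*Complex.I*(-1:ℂ)*((f ℓ i : ℝ):ℂ))
            = -(2*(Real.pi:ℂ)*Complex.I*((f ℓ i : ℝ):ℂ)) by ring,
          show (2*(Real.pi:ℂ)*Complex.I*(1:ℂ)*((f ℓ i : ℝ):ℂ))
            = 2*(Real.pi:ℂ)*Complex.I*((f ℓ i : ℝ):ℂ) by ring]
        ring
      · rw [Complex.add_conj]
        push_cast
        ring
    rw [hg]
    ring
  refine ⟨key, ?_⟩
  ext m n
  rw [key m n]
  simp only [Matrix.sum_apply, Matrix.smul_apply, Matrix.vecMulVec_apply, Pi.star_apply,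
    smul_eq_mul, sinusoid]
  refine Finset.sum_congr rfl fun ℓ _ => ?_
  rw [star_prod, ← Finset.prod_mul_distrib]
  congr 1
  refine Finset.prod_congr rfl fun j _ => ?_
  have hs : star (Complex.exp (2 * (Real.pi : ℂ) * Complex.I * ((n j : ℕ) : ℂ) * ((f ℓ j : ℝ) : ℂ)))
      = Complex.exp (-(2 * (Real.pi : ℂ) * Complex.I * ((n j : ℕ) : ℂ) * ((f ℓ j : ℝ) : ℂ))) := by
    rw [RCLike.star_def, ← Complex.exp_conj]
    congr 1
    simp [_root_.map_mul, map_ofNat, Complex.conj_ofReal, Complex.conj_I, Complex.conj_natCast]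
  rw [hs, ← Complex.exp_add]
  congr 1
  push_cast
  ring
end

section
/- Let x ∈ ℂ^I admit at least one decomposition x = ∑_{ℓ=1}^{L} σ_ℓ a(f_ℓ) with all f_ℓ ∈ F. Call a pair (B, t), with B : ℤ^d → ℂ and t ∈ ℝ, feasible if the (N_D + 1) × (N_D + 1) block matrix [[T(B), x], [xᴴ, t]] is positive semidefinite and T_{g_i}(B) is positive semidefinite for every i = 1,...,d. Then for every decomposition x = ∑_{ℓ=1}^{L} σ_ℓ a(f_ℓ) with f_ℓ ∈ F, the pair given by B(p) = ∑_{ℓ=1}^{L} |σ_ℓ| ∏_{i=1}^{d} e^{2πi p_i f_{i,ℓ}} and t = ∑_{ℓ=1}^{L} |σ_ℓ| is feasible with objective value (1/(2N_D))·Tr(T(B)) + t/2 = ∑_{ℓ=1}^{L} |σ_ℓ|; consequently, the infimum of (1/(2N_D))·Tr(T(B)) + t/2 over all feasible (B, t) is at most ‖x‖_{A(F)}. -/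
open Complex Matrix BigOperators
open scoped ComplexOrder

lemma psd_sum {n : Type*} [Fintype n] {L : ℕ} (c : Fin L → ℝ)
    (hc : ∀ ℓ, 0 ≤ c ℓ) (w : Fin L → n → ℂ) :
    (Matrix.of fun j k => ∑ ℓ, (c ℓ : ℂ) * (w ℓ j * (starRingEnd ℂ) (w ℓ k))).PosSemidef := by
  have h : (Matrix.of fun j k => ∑ ℓ, (c ℓ : ℂ) * (w ℓ j * (starRingEnd ℂ) (w ℓ k)))
      = (Matrix.of fun (ℓ : Fin L) j => ((Real.sqrt (c ℓ) : ℝ) : ℂ) * (starRingEnd ℂ) (w ℓ j))ᴴ *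
        (Matrix.of fun (ℓ : Fin L) j => ((Real.sqrt (c ℓ) : ℝ) : ℂ) * (starRingEnd ℂ) (w ℓ j)) := by
    ext j k
    simp only [Matrix.mul_apply, Matrix.conjTranspose_apply, Matrix.of_apply]
    refine Finset.sum_congr rfl fun ℓ _ => ?_
    have : star (((Real.sqrt (c ℓ) : ℝ) : ℂ) * (starRingEnd ℂ) (w ℓ j)) *
        (((Real.sqrt (c ℓ) : ℝ) : ℂ) * (starRingEnd ℂ) (w ℓ k))
        = (((Real.sqrt (c ℓ) * Real.sqrt (c ℓ) : ℝ)) : ℂ) * (w ℓ j * (starRingEnd ℂ) (w ℓ k)) := by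
      simp only [star_mul', RCLike.star_def, Complex.conj_ofReal, RingHomCompTriple.comp_apply,
        RingHom.id_apply, starRingEnd_self_apply]
      push_cast; ring
    rw [this, Real.mul_self_sqrt (hc ℓ)]
  rw [h]
  exact Matrix.posSemidef_conjTranspose_mul_self _

lemma psd_diag {n : Type*} [Fintype n] [DecidableEq n] {M : Matrix n n ℂ}
    (h : M.PosSemidef) (j : n) : 0 ≤ (M j j).re := by
  have h2 := h.dotProduct_mulVec_nonneg (Pi.single j 1)
  have he : star (Pi.single j 1 : n → ℂ) ⬝ᵥ M *ᵥ Pi.single j 1 = M j j := by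
    simp [Matrix.mulVec_single, dotProduct, Pi.single_apply, apply_ite]
  rw [he] at h2
  exact (Complex.le_def.mp h2).1

lemma prodE {d : ℕ} (f : Fin d → ℝ) (a b : Fin d → ℤ) :
    (∏ i, Complex.exp (2 * (Real.pi : ℂ) * Complex.I * ((a i - b i : ℤ) : ℂ) * ((f i : ℝ) : ℂ)))
    = (∏ i, Complex.exp (2 * (Real.pi : ℂ) * Complex.I * ((a i : ℤ) : ℂ) * ((f i : ℝ) : ℂ))) *
      (starRingEnd ℂ) (∏ i, Complex.exp (2 * (Real.pi : ℂ) * Complex.I * ((b i : ℤ) : ℂ) * ((f i : ℝ) : ℂ))) := by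
  rw [map_prod, ← Finset.prod_mul_distrib]
  refine Finset.prod_congr rfl fun i _ => ?_
  rw [← Complex.exp_conj, ← Complex.exp_add]
  congr 1
  simp only [_root_.map_mul, Complex.conj_ofReal, Complex.conj_I, map_intCast, map_ofNat]
  push_cast; ring

lemma prodShiftAdd {d : ℕ} (f : Fin d → ℝ) (q : Fin d → ℤ) (i0 : Fin d) :
    (∏ i, Complex.exp (2 * (Real.pi : ℂ) * Complex.I * ((q i + (if i = i0 then 1 else 0) : ℤ) : ℂ) * ((f i : ℝ) : ℂ)))
    = (∏ i, Complex.exp (2 * (Real.pi : ℂ) * Complex.I * ((q i : ℤ) : ℂ) * ((f i : ℝ) : ℂ))) *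
      Complex.exp (2 * (Real.pi : ℂ) * Complex.I * ((f i0 : ℝ) : ℂ)) := by
  rw [← Complex.exp_sum, ← Complex.exp_sum, ← Complex.exp_add]
  congr 1
  have : ∀ i, 2 * (Real.pi : ℂ) * Complex.I * ((q i + (if i = i0 then 1 else 0) : ℤ) : ℂ) * ((f i : ℝ) : ℂ)
      = 2 * (Real.pi : ℂ) * Complex.I * ((q i : ℤ) : ℂ) * ((f i : ℝ) : ℂ) +
        (if i = i0 then 2 * (Real.pi : ℂ) * Complex.I * ((f i0 : ℝ) : ℂ) else 0) := by
    intro i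
    split_ifs with h
    · subst h; push_cast; ring
    · push_cast; ring
  simp_rw [this, Finset.sum_add_distrib, Finset.sum_ite_eq' Finset.univ i0,
    if_pos (Finset.mem_univ i0)]

lemma prodShiftSub {d : ℕ} (f : Fin d → ℝ) (q : Fin d → ℤ) (i0 : Fin d) :
    (∏ i, Complex.exp (2 * (Real.pi : ℂ) * Complex.I * ((q i - (if i = i0 then 1 else 0) : ℤ) : ℂ) * ((f i : ℝ) : ℂ)))
    = (∏ i, Complex.exp (2 * (Real.pi : ℂ) * Complex.I * ((q i : ℤ) : ℂ) * ((f i : ℝ) : ℂ))) *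
      Complex.exp (-(2 * (Real.pi : ℂ) * Complex.I * ((f i0 : ℝ) : ℂ))) := by
  rw [← Complex.exp_sum, ← Complex.exp_sum, ← Complex.exp_add]
  congr 1
  have : ∀ i, 2 * (Real.pi : ℂ) * Complex.I * ((q i - (if i = i0 then 1 else 0) : ℤ) : ℂ) * ((f i : ℝ) : ℂ)
      = 2 * (Real.pi : ℂ) * Complex.I * ((q i : ℤ) : ℂ) * ((f i : ℝ) : ℂ) +
        (if i = i0 then -(2 * (Real.pi : ℂ) * Complex.I * ((f i0 : ℝ) : ℂ)) else 0) := by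
    intro i
    split_ifs with h
    · subst h; push_cast; ring
    · push_cast; ring
  simp_rw [this, Finset.sum_add_distrib, Finset.sum_ite_eq' Finset.univ i0,
    if_pos (Finset.mem_univ i0)]

lemma habs (σ : ℂ) : ((‖σ‖ : ℝ) : ℂ) * (σ / ((‖σ‖ : ℝ) : ℂ)) = σ := by
  rcases eq_or_ne σ 0 with h | h
  · simp [h]
  · have : ((‖σ‖ : ℝ) : ℂ) ≠ 0 := by
      simpa using (norm_ne_zero_iff.mpr h)
    field_simp

lemma hconjmul (σ : ℂ) : (starRingEnd ℂ) σ * σ = ((‖σ‖ : ℝ) : ℂ) * ((‖σ‖ : ℝ) : ℂ) := by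
  rw [mul_comm, Complex.mul_conj, Complex.normSq_eq_norm_sq]
  push_cast; ring


/-- The `(N_D+1) × (N_D+1)` block matrix `[[T(B), x], [xᴴ, t]]`. -/
noncomputable def blockMat {d : ℕ} (N : Fin d → ℕ) (B : (Fin d → ℤ) → ℂ)
    (x : (∀ i, Fin (N i)) → ℂ) (t : ℝ) :
    Matrix ((∀ i, Fin (N i)) ⊕ Unit) ((∀ i, Fin (N i)) ⊕ Unit) ℂ :=
  Matrix.fromBlocks (toepT N B) (Matrix.of fun m _ => x m)
    (Matrix.of fun _ n => (starRingEnd ℂ) (x n)) (Matrix.of fun _ _ => (t : ℂ))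

/-- The frequency-selective atomic norm
`‖x‖_{A(F)} = inf { ∑ |σ_ℓ| : x = ∑ σ_ℓ a(f_ℓ), f_ℓ ∈ F₁ × ⋯ × F_d }`. -/
noncomputable def atomicNorm {d : ℕ} (N : Fin d → ℕ) (F : Fin d → Set ℝ)
    (x : (∀ i, Fin (N i)) → ℂ) : ℝ :=
  sInf { s : ℝ | ∃ (L : ℕ) (σ : Fin L → ℂ) (f : Fin L → Fin d → ℝ),
    (∀ ℓ i, f ℓ i ∈ F i) ∧ (x = ∑ ℓ, σ ℓ • sinusoid N (f ℓ)) ∧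
    s = ∑ ℓ, ‖σ ℓ‖ }

/-- A pair `(B, t)` is feasible if `[[T(B), x], [xᴴ, t]] ⪰ 0` and every
`T_{g_i}(B) ⪰ 0`, for the polynomials `g_i` determined by `[f_{L,i}, f_{H,i}]`. -/
def Feasible {d : ℕ} (N : Fin d → ℕ) (fL fH : Fin d → ℝ)
    (x : (∀ i, Fin (N i)) → ℂ) (B : (Fin d → ℤ) → ℂ) (t : ℝ) : Prop :=
  (blockMat N B x t).PosSemidef ∧
  ∀ i, (toepTg N i (-2 * Real.cos (Real.pi * (fH i - fL i)))
      (Complex.exp ((Real.pi : ℂ) * Complex.I * ((fL i : ℂ) + (fH i : ℂ)))) B).PosSemidef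

/-- Every atomic decomposition of `x` on `F` yields a feasible pair `(B, t)` with
objective value `(1/(2N_D)) Tr T(B) + t/2 = ∑ |σ_ℓ|`; consequently the infimum of
the SDP objective over feasible pairs is at most `‖x‖_{A(F)}`. -/
theorem stmt10 {d : ℕ} (hd : 1 ≤ d) (N : Fin d → ℕ) (hN : ∀ i, 2 ≤ N i)
    (fL fH : Fin d → ℝ) (hL0 : ∀ i, 0 ≤ fL i) (hLH : ∀ i, fL i < fH i)
    (hH1 : ∀ i, fH i < 1)
    (x : (∀ i, Fin (N i)) → ℂ)
    (hx : ∃ (L : ℕ) (σ : Fin L → ℂ) (f : Fin L → Fin d → ℝ),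
      (∀ ℓ i, f ℓ i ∈ Set.Icc (fL i) (fH i)) ∧ x = ∑ ℓ, σ ℓ • sinusoid N (f ℓ)) :
    (∀ (L : ℕ) (σ : Fin L → ℂ) (f : Fin L → Fin d → ℝ),
      (∀ ℓ i, f ℓ i ∈ Set.Icc (fL i) (fH i)) →
      x = ∑ ℓ, σ ℓ • sinusoid N (f ℓ) →
      Feasible N fL fH x
        (fun p => ∑ ℓ, (‖σ ℓ‖ : ℂ) *
          ∏ i, Complex.exp (2 * (Real.pi : ℂ) * Complex.I * ((p i : ℤ) : ℂ) * ((f ℓ i : ℝ) : ℂ)))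
        (∑ ℓ, ‖σ ℓ‖) ∧
      (1 / (2 * ((∏ i, N i : ℕ) : ℝ))) *
          ((toepT N (fun p => ∑ ℓ, (‖σ ℓ‖ : ℂ) *
            ∏ i, Complex.exp (2 * (Real.pi : ℂ) * Complex.I * ((p i : ℤ) : ℂ) *
              ((f ℓ i : ℝ) : ℂ)))).trace).re
        + (∑ ℓ, ‖σ ℓ‖) / 2 = ∑ ℓ, ‖σ ℓ‖) ∧
    sInf { s : ℝ | ∃ (B : (Fin d → ℤ) → ℂ) (t : ℝ), Feasible N fL fH x B t ∧
        s = (1 / (2 * ((∏ i, N i : ℕ) : ℝ))) * ((toepT N B).trace).re + t / 2 }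
      ≤ atomicNorm N (fun i => Set.Icc (fL i) (fH i)) x := by
  have hND : (0 : ℝ) < ((∏ i, N i : ℕ) : ℝ) := by
    have : 0 < ∏ i, N i := Finset.prod_pos fun i _ => by have := hN i; omega
    exact_mod_cast this
  have h1 : ∀ (L : ℕ) (σ : Fin L → ℂ) (f : Fin L → Fin d → ℝ),
      (∀ ℓ i, f ℓ i ∈ Set.Icc (fL i) (fH i)) →
      x = ∑ ℓ, σ ℓ • sinusoid N (f ℓ) →
      Feasible N fL fH x
        (fun p => ∑ ℓ, (‖σ ℓ‖ : ℂ) *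
          ∏ i, Complex.exp (2 * (Real.pi : ℂ) * Complex.I * ((p i : ℤ) : ℂ) * ((f ℓ i : ℝ) : ℂ)))
        (∑ ℓ, ‖σ ℓ‖) ∧
      (1 / (2 * ((∏ i, N i : ℕ) : ℝ))) *
          ((toepT N (fun p => ∑ ℓ, (‖σ ℓ‖ : ℂ) *
            ∏ i, Complex.exp (2 * (Real.pi : ℂ) * Complex.I * ((p i : ℤ) : ℂ) *
              ((f ℓ i : ℝ) : ℂ)))).trace).re
        + (∑ ℓ, ‖σ ℓ‖) / 2 = ∑ ℓ, ‖σ ℓ‖ := by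
    intro L σ f hf hxeq
    refine ⟨⟨?_, ?_⟩, ?_⟩
    · -- blockMat PSD
      set w : Fin L → ((∀ i, Fin (N i)) ⊕ Unit) → ℂ := fun ℓ => Sum.elim
        (fun m : (∀ i, Fin (N i)) => ∏ i, Complex.exp (2 * (Real.pi : ℂ) * Complex.I * ((m i : ℕ) : ℂ) * ((f ℓ i : ℝ) : ℂ)))
        (fun _ : Unit => (starRingEnd ℂ) (σ ℓ) / ((‖σ ℓ‖ : ℝ) : ℂ)) with hw
      have key : (blockMat N
          (fun p => ∑ ℓ, (‖σ ℓ‖ : ℂ) *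
              ∏ i, Complex.exp (2 * (Real.pi : ℂ) * Complex.I * ((p i : ℤ) : ℂ) * ((f ℓ i : ℝ) : ℂ)))
          x (∑ ℓ, ‖σ ℓ‖))
          = Matrix.of fun j k => ∑ ℓ, ((‖σ ℓ‖ : ℝ) : ℂ) * (w ℓ j * (starRingEnd ℂ) (w ℓ k)) := by
        ext j k
        cases j with
        | inl m =>
          cases k with
          | inl n =>
            show (∑ ℓ, (‖σ ℓ‖ : ℂ) *
                ∏ i, Complex.exp (2 * (Real.pi : ℂ) * Complex.I * (((fun i => ((m i : ℤ) - (n i : ℤ))) i : ℤ) : ℂ) * ((f ℓ i : ℝ) : ℂ))) = _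
            simp only [Matrix.of_apply, hw, Sum.elim_inl]
            refine Finset.sum_congr rfl fun ℓ _ => ?_
            rw [show (∏ i, Complex.exp (2 * (Real.pi : ℂ) * Complex.I * (((fun i => ((m i : ℤ) - (n i : ℤ))) i : ℤ) : ℂ) * ((f ℓ i : ℝ) : ℂ)))
                = ∏ i, Complex.exp (2 * (Real.pi : ℂ) * Complex.I * ((((fun i => (m i : ℤ)) i) - ((fun i => (n i : ℤ)) i) : ℤ) : ℂ) * ((f ℓ i : ℝ) : ℂ)) from rfl,
              prodE (f ℓ) (fun i => (m i : ℤ)) (fun i => (n i : ℤ))]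
            norm_cast
          | inr u =>
            show x m = _
            simp only [Matrix.of_apply, hw, Sum.elim_inl, Sum.elim_inr, hxeq, Finset.sum_apply,
              Pi.smul_apply, smul_eq_mul, sinusoid, map_div₀, Complex.conj_conj, Complex.conj_ofReal]
            refine Finset.sum_congr rfl fun ℓ _ => ?_
            rw [show ((‖σ ℓ‖ : ℝ) : ℂ) *
                ((∏ i, Complex.exp (2 * (Real.pi : ℂ) * Complex.I * ((m i : ℕ) : ℂ) * ((f ℓ i : ℝ) : ℂ))) *
                  (σ ℓ / ((‖σ ℓ‖ : ℝ) : ℂ)))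
                = (((‖σ ℓ‖ : ℝ) : ℂ) * (σ ℓ / ((‖σ ℓ‖ : ℝ) : ℂ))) *
                  ∏ i, Complex.exp (2 * (Real.pi : ℂ) * Complex.I * ((m i : ℕ) : ℂ) * ((f ℓ i : ℝ) : ℂ)) by ring,
              habs]
        | inr u =>
          cases k with
          | inl n =>
            show (starRingEnd ℂ) (x n) = _
            simp only [Matrix.of_apply, hw, Sum.elim_inl, Sum.elim_inr, hxeq, Finset.sum_apply,
              Pi.smul_apply, smul_eq_mul, sinusoid, map_sum, _root_.map_mul]
            refine Finset.sum_congr rfl fun ℓ _ => ?_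
            rw [show ((‖σ ℓ‖ : ℝ) : ℂ) *
                ((starRingEnd ℂ) (σ ℓ) / ((‖σ ℓ‖ : ℝ) : ℂ) *
                  (starRingEnd ℂ) (∏ i, Complex.exp (2 * (Real.pi : ℂ) * Complex.I * ((n i : ℕ) : ℂ) * ((f ℓ i : ℝ) : ℂ))))
                = (((‖σ ℓ‖ : ℝ) : ℂ) * ((starRingEnd ℂ) (σ ℓ) / ((‖σ ℓ‖ : ℝ) : ℂ))) *
                  (starRingEnd ℂ) (∏ i, Complex.exp (2 * (Real.pi : ℂ) * Complex.I * ((n i : ℕ) : ℂ) * ((f ℓ i : ℝ) : ℂ))) by ring]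
            rw [show ((‖σ ℓ‖ : ℝ) : ℂ) = ((‖(starRingEnd ℂ) (σ ℓ)‖ : ℝ) : ℂ) by
              rw [Complex.norm_conj], habs]
          | inr u' =>
            show ((∑ ℓ, ‖σ ℓ‖ : ℝ) : ℂ) = _
            simp only [Matrix.of_apply, hw, Sum.elim_inr, map_div₀, Complex.conj_conj,
              Complex.conj_ofReal]
            push_cast
            refine Finset.sum_congr rfl fun ℓ _ => ?_
            rcases eq_or_ne (σ ℓ) 0 with h | h
            · simp [h]
            · have hne : ((‖σ ℓ‖ : ℝ) : ℂ) ≠ 0 := by simpa using (norm_ne_zero_iff.mpr h)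
              field_simp
              rw [hconjmul]; ring
      rw [key]
      exact psd_sum _ (fun ℓ => norm_nonneg _) w
    · -- toepTg PSD
      intro i0
      set θ : Fin L → ℝ := fun ℓ => 2 * Real.pi * f ℓ i0 - Real.pi * (fL i0 + fH i0) with hθ
      set g : Fin L → ℝ := fun ℓ => 2 * Real.cos (θ ℓ) + (-2 * Real.cos (Real.pi * (fH i0 - fL i0))) with hgdef
      have hg : ∀ ℓ, 0 ≤ g ℓ := by
        intro ℓ
        have h1 : fL i0 ≤ f ℓ i0 := (hf ℓ i0).1
        have h2 : f ℓ i0 ≤ fH i0 := (hf ℓ i0).2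
        have habs2 : |2 * f ℓ i0 - fL i0 - fH i0| ≤ fH i0 - fL i0 := by
          rw [abs_le]; constructor <;> linarith
        have hθeq : θ ℓ = Real.pi * (2 * f ℓ i0 - fL i0 - fH i0) := by rw [hθ]; ring
        have hcos : Real.cos (Real.pi * (fH i0 - fL i0)) ≤ Real.cos (θ ℓ) := by
          rw [← Real.cos_abs (θ ℓ)]
          refine Real.cos_le_cos_of_nonneg_of_le_pi (abs_nonneg _) ?_ ?_
          · nlinarith [Real.pi_pos, hL0 i0, hH1 i0, hLH i0]
          · rw [hθeq, abs_mul, _root_.abs_of_nonneg Real.pi_pos.le]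
            exact mul_le_mul_of_nonneg_left habs2 Real.pi_pos.le
        simp only [hgdef]; linarith
      set w : Fin L → (∀ i, Fin (N i - 1)) → ℂ := fun ℓ m =>
        ∏ i, Complex.exp (2 * (Real.pi : ℂ) * Complex.I * ((m i : ℕ) : ℂ) * ((f ℓ i : ℝ) : ℂ)) with hwdef
      have hbr : ∀ ℓ, (starRingEnd ℂ) (Complex.exp ((Real.pi : ℂ) * Complex.I * ((fL i0 : ℂ) + (fH i0 : ℂ)))) *
          Complex.exp (2 * (Real.pi : ℂ) * Complex.I * ((f ℓ i0 : ℝ) : ℂ)) +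
          ((-2 * Real.cos (Real.pi * (fH i0 - fL i0)) : ℝ) : ℂ) +
          Complex.exp ((Real.pi : ℂ) * Complex.I * ((fL i0 : ℂ) + (fH i0 : ℂ))) *
          Complex.exp (-(2 * (Real.pi : ℂ) * Complex.I * ((f ℓ i0 : ℝ) : ℂ))) = ((g ℓ : ℝ) : ℂ) := by
        intro ℓ
        have e1 : (starRingEnd ℂ) (Complex.exp ((Real.pi : ℂ) * Complex.I * ((fL i0 : ℂ) + (fH i0 : ℂ)))) *
            Complex.exp (2 * (Real.pi : ℂ) * Complex.I * ((f ℓ i0 : ℝ) : ℂ))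
            = Complex.exp (((θ ℓ : ℝ) : ℂ) * Complex.I) := by
          rw [← Complex.exp_conj, ← Complex.exp_add]
          congr 1
          simp only [_root_.map_mul, map_add, Complex.conj_ofReal, Complex.conj_I]
          rw [hθ]; push_cast; ring
        have e2 : Complex.exp ((Real.pi : ℂ) * Complex.I * ((fL i0 : ℂ) + (fH i0 : ℂ))) *
            Complex.exp (-(2 * (Real.pi : ℂ) * Complex.I * ((f ℓ i0 : ℝ) : ℂ)))
            = Complex.exp (-((θ ℓ : ℝ) : ℂ) * Complex.I) := by
          rw [← Complex.exp_add]
          congr 1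
          rw [hθ]; push_cast; ring
        rw [e1, e2]
        have h2c := Complex.two_cos (((θ ℓ : ℝ)) : ℂ)
        rw [show Complex.exp (((θ ℓ : ℝ) : ℂ) * Complex.I) + ((-2 * Real.cos (Real.pi * (fH i0 - fL i0)) : ℝ) : ℂ) +
            Complex.exp (-((θ ℓ : ℝ) : ℂ) * Complex.I)
            = (Complex.exp (((θ ℓ : ℝ) : ℂ) * Complex.I) + Complex.exp (-((θ ℓ : ℝ) : ℂ) * Complex.I)) +
              ((-2 * Real.cos (Real.pi * (fH i0 - fL i0)) : ℝ) : ℂ) by ring, ← h2c, hgdef]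
        rw [← Complex.ofReal_cos]
        push_cast; ring
      have key : (toepTg N i0 (-2 * Real.cos (Real.pi * (fH i0 - fL i0)))
          (Complex.exp ((Real.pi : ℂ) * Complex.I * ((fL i0 : ℂ) + (fH i0 : ℂ))))
          (fun p => ∑ ℓ, (‖σ ℓ‖ : ℂ) *
              ∏ i, Complex.exp (2 * (Real.pi : ℂ) * Complex.I * ((p i : ℤ) : ℂ) * ((f ℓ i : ℝ) : ℂ))))
          = Matrix.of fun m n => ∑ ℓ, ((‖σ ℓ‖ * g ℓ : ℝ) : ℂ) * (w ℓ m * (starRingEnd ℂ) (w ℓ n)) := by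
        ext m n
        simp only [toepTg, Matrix.of_apply]
        rw [Finset.mul_sum, Finset.mul_sum, Finset.mul_sum, ← Finset.sum_add_distrib,
          ← Finset.sum_add_distrib]
        refine Finset.sum_congr rfl fun ℓ _ => ?_
        rw [prodShiftAdd (f ℓ) (fun i => (m i : ℤ) - (n i : ℤ)) i0,
          prodShiftSub (f ℓ) (fun i => (m i : ℤ) - (n i : ℤ)) i0]
        have hP : (∏ i, Complex.exp (2 * (Real.pi : ℂ) * Complex.I * (((m i : ℤ) - (n i : ℤ) : ℤ) : ℂ) * ((f ℓ i : ℝ) : ℂ)))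
            = w ℓ m * (starRingEnd ℂ) (w ℓ n) := by
          rw [prodE (f ℓ) (fun i => (m i : ℤ)) (fun i => (n i : ℤ)), hwdef]
          norm_cast
        rw [show (starRingEnd ℂ) (Complex.exp ((Real.pi : ℂ) * Complex.I * ((fL i0 : ℂ) + (fH i0 : ℂ)))) *
            ((‖σ ℓ‖ : ℂ) *
              ((∏ i, Complex.exp (2 * (Real.pi : ℂ) * Complex.I * (((m i : ℤ) - (n i : ℤ) : ℤ) : ℂ) * ((f ℓ i : ℝ) : ℂ))) *
                Complex.exp (2 * (Real.pi : ℂ) * Complex.I * ((f ℓ i0 : ℝ) : ℂ)))) +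
            ((-2 * Real.cos (Real.pi * (fH i0 - fL i0)) : ℝ) : ℂ) *
              ((‖σ ℓ‖ : ℂ) *
                ∏ i, Complex.exp (2 * (Real.pi : ℂ) * Complex.I * (((m i : ℤ) - (n i : ℤ) : ℤ) : ℂ) * ((f ℓ i : ℝ) : ℂ))) +
            Complex.exp ((Real.pi : ℂ) * Complex.I * ((fL i0 : ℂ) + (fH i0 : ℂ))) *
              ((‖σ ℓ‖ : ℂ) *
                ((∏ i, Complex.exp (2 * (Real.pi : ℂ) * Complex.I * (((m i : ℤ) - (n i : ℤ) : ℤ) : ℂ) * ((f ℓ i : ℝ) : ℂ))) *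
                  Complex.exp (-(2 * (Real.pi : ℂ) * Complex.I * ((f ℓ i0 : ℝ) : ℂ)))))
            = (‖σ ℓ‖ : ℂ) *
              ((starRingEnd ℂ) (Complex.exp ((Real.pi : ℂ) * Complex.I * ((fL i0 : ℂ) + (fH i0 : ℂ)))) *
                  Complex.exp (2 * (Real.pi : ℂ) * Complex.I * ((f ℓ i0 : ℝ) : ℂ)) +
                ((-2 * Real.cos (Real.pi * (fH i0 - fL i0)) : ℝ) : ℂ) +
                Complex.exp ((Real.pi : ℂ) * Complex.I * ((fL i0 : ℂ) + (fH i0 : ℂ))) *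
                  Complex.exp (-(2 * (Real.pi : ℂ) * Complex.I * ((f ℓ i0 : ℝ) : ℂ)))) *
              ∏ i, Complex.exp (2 * (Real.pi : ℂ) * Complex.I * (((m i : ℤ) - (n i : ℤ) : ℤ) : ℂ) * ((f ℓ i : ℝ) : ℂ)) by push_cast; ring]
        rw [hbr ℓ, hP]
        push_cast; ring
      rw [key]
      exact psd_sum (fun ℓ => ‖σ ℓ‖ * g ℓ)
        (fun ℓ => mul_nonneg (norm_nonneg _) (hg ℓ)) w
    · -- objective value
      have htr : (toepT N (fun p => ∑ ℓ, (‖σ ℓ‖ : ℂ) *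
              ∏ i, Complex.exp (2 * (Real.pi : ℂ) * Complex.I * ((p i : ℤ) : ℂ) *
                ((f ℓ i : ℝ) : ℂ)))).trace
          = (((∏ i, N i : ℕ) : ℝ) * (∑ ℓ, ‖σ ℓ‖) : ℝ) := by
        simp only [Matrix.trace, Matrix.diag, toepT, Matrix.of_apply, sub_self, Int.cast_zero,
          mul_zero, zero_mul, Complex.exp_zero, Finset.prod_const_one, mul_one]
        rw [Finset.sum_const, Finset.card_univ]
        have hcard : Fintype.card (∀ i, Fin (N i)) = ∏ i, N i := by
          simp [Fintype.card_pi]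
        rw [hcard, nsmul_eq_mul]
        push_cast
        ring
      rw [htr, Complex.ofReal_re]
      have hne : ((∏ i, N i : ℕ) : ℝ) ≠ 0 := ne_of_gt hND
      have hne2 : (∏ i, ((N i : ℕ) : ℝ)) ≠ 0 := by push_cast at hne; exact hne
      field_simp
      ring
  refine ⟨h1, ?_⟩
  obtain ⟨L0, σ0, f0, hf0, hx0⟩ := hx
  have hSne : { s : ℝ | ∃ (L : ℕ) (σ : Fin L → ℂ) (f : Fin L → Fin d → ℝ),
      (∀ ℓ i, f ℓ i ∈ Set.Icc (fL i) (fH i)) ∧ (x = ∑ ℓ, σ ℓ • sinusoid N (f ℓ)) ∧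
      s = ∑ ℓ, ‖σ ℓ‖ }.Nonempty :=
    ⟨∑ ℓ, ‖σ0 ℓ‖, L0, σ0, f0, hf0, hx0, rfl⟩
  have hbdd : BddBelow { s : ℝ | ∃ (B : (Fin d → ℤ) → ℂ) (t : ℝ), Feasible N fL fH x B t ∧
      s = (1 / (2 * ((∏ i, N i : ℕ) : ℝ))) * ((toepT N B).trace).re + t / 2 } := by
    refine ⟨0, fun s hs => ?_⟩
    obtain ⟨B, t, ⟨hps, _⟩, rfl⟩ := hs
    have ht : 0 ≤ t := by
      have := psd_diag hps (Sum.inr ())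
      simpa [blockMat, Matrix.fromBlocks] using this
    have htr : 0 ≤ ((toepT N B).trace).re := by
      rw [Matrix.trace, Complex.re_sum]
      refine Finset.sum_nonneg fun m _ => ?_
      have := psd_diag hps (Sum.inl m)
      simpa [blockMat, Matrix.fromBlocks, toepT] using this
    have hpos : (0 : ℝ) ≤ 1 / (2 * ((∏ i, N i : ℕ) : ℝ)) := by positivity
    have := mul_nonneg hpos htr
    linarith
  refine csInf_le_csInf hbdd hSne ?_
  rintro s ⟨L, σ, f, hf, hxe, rfl⟩
  exact ⟨_, _, (h1 L σ f hf hxe).1, ((h1 L σ f hf hxe).2).symm⟩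
end

section
/- Let A ∈ ℂ^{N×r} have full column rank (rank(A) = r), let σ_1,...,σ_r ≥ 0 be reals, let w ∈ ℂ^r, and let t > 0. If A · diag(σ) · Aᴴ − t^{-1} (A w)(A w)ᴴ is positive semidefinite, then ∑_{ℓ=1}^{r} σ_ℓ ≥ t^{-1} (∑_{ℓ=1}^{r} |w_ℓ|)^2. -/
open Complex Matrix BigOperators
open scoped ComplexOrder

/-- If `A` has full column rank, `σ_ℓ ≥ 0`, `t > 0`, and
`A diag(σ) Aᴴ - t⁻¹ (Aw)(Aw)ᴴ` is PSD, then `∑ σ_ℓ ≥ t⁻¹ (∑ |w_ℓ|)²`. -/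
theorem stmt14 {N r : ℕ} (A : Matrix (Fin N) (Fin r) ℂ) (hA : A.rank = r)
    (σ : Fin r → ℝ) (hσ : ∀ ℓ, 0 ≤ σ ℓ) (w : Fin r → ℂ) (t : ℝ) (ht : 0 < t)
    (h : (A * Matrix.diagonal (fun ℓ => (σ ℓ : ℂ)) * A.conjTranspose -
        ((t : ℂ))⁻¹ • Matrix.vecMulVec (A.mulVec w) (star (A.mulVec w))).PosSemidef) :
    t⁻¹ * (∑ ℓ, ‖w ℓ‖) ^ 2 ≤ ∑ ℓ, σ ℓ := by
  have hrank : Aᴴ.rank = r := by rw [Matrix.rank_conjTranspose, hA]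
  have hsurj : Function.Surjective Aᴴ.mulVecLin := by
    rw [← LinearMap.range_eq_top]
    apply Submodule.eq_top_of_finrank_eq
    rw [← Matrix.rank, hrank, Module.finrank_pi]
    simp
  set x : Fin r → ℂ := fun ℓ => if w ℓ = 0 then 1 else w ℓ / ‖w ℓ‖ with hxdef
  have hxabs : ∀ ℓ, (starRingEnd ℂ) (x ℓ) * x ℓ = 1 := by
    intro ℓ
    by_cases hw : w ℓ = 0
    · simp [hxdef, hw]
    · have h0 : (‖w ℓ‖ : ℂ) ≠ 0 := by simpa using hw
      simp only [hxdef, if_neg hw, map_div₀, Complex.conj_ofReal]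
      rw [div_mul_div_comm, ← Complex.normSq_eq_conj_mul_self, Complex.normSq_eq_norm_sq,
        ← Complex.ofReal_mul, ← sq, Complex.ofReal_pow]
      exact div_self (pow_ne_zero 2 h0)
  have hxw : ∀ ℓ, (starRingEnd ℂ) (x ℓ) * w ℓ = (‖w ℓ‖ : ℂ) := by
    intro ℓ
    by_cases hw : w ℓ = 0
    · simp [hxdef, hw]
    · have h0 : (‖w ℓ‖ : ℂ) ≠ 0 := by simpa using hw
      simp only [hxdef, if_neg hw, map_div₀, Complex.conj_ofReal]
      rw [div_mul_eq_mul_div, mul_comm, Complex.mul_conj,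
        Complex.normSq_eq_norm_sq, sq, Complex.ofReal_mul, mul_div_assoc, div_self h0, mul_one]
  obtain ⟨z, hz⟩ := hsurj x
  simp only [Matrix.mulVecLin_apply] at hz
  have hq := h.dotProduct_mulVec_nonneg z
  have hstar : star z ᵥ* A = star x := by
    rw [← Matrix.conjTranspose_conjTranspose A, ← Matrix.star_mulVec, hz]
  have e1 : star z ⬝ᵥ (A * Matrix.diagonal (fun ℓ => (σ ℓ : ℂ)) * Aᴴ) *ᵥ z
      = ∑ ℓ, (σ ℓ : ℂ) := by
    rw [← Matrix.mulVec_mulVec, ← Matrix.mulVec_mulVec, hz, Matrix.dotProduct_mulVec, hstar]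
    simp only [dotProduct, Matrix.mulVec_diagonal, Pi.star_apply, RCLike.star_def]
    refine Finset.sum_congr rfl fun ℓ _ => ?_
    rw [show (starRingEnd ℂ) (x ℓ) * ((σ ℓ : ℂ) * x ℓ)
      = (starRingEnd ℂ) (x ℓ) * x ℓ * (σ ℓ : ℂ) by ring, hxabs, one_mul]
  have hc : star z ⬝ᵥ (A *ᵥ w) = ∑ ℓ, (‖w ℓ‖ : ℂ) := by
    rw [Matrix.dotProduct_mulVec, hstar]
    simp only [dotProduct, Pi.star_apply, RCLike.star_def]
    exact Finset.sum_congr rfl fun ℓ _ => hxw ℓ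
  have e2 : star z ⬝ᵥ (Matrix.vecMulVec (A *ᵥ w) (star (A *ᵥ w))) *ᵥ z
      = ((∑ ℓ, (‖w ℓ‖ : ℂ)))^2 := by
    have hmv : (Matrix.vecMulVec (A *ᵥ w) (star (A *ᵥ w))) *ᵥ z
        = (star (A *ᵥ w) ⬝ᵥ z) • (A *ᵥ w) := by
      ext i
      simp [Matrix.vecMulVec, Matrix.mulVec, dotProduct, Finset.mul_sum, mul_assoc,
        mul_comm, mul_left_comm]
    have hcc : star (A *ᵥ w) ⬝ᵥ z = ∑ ℓ, (‖w ℓ‖ : ℂ) := by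
      have := congrArg star hc
      rw [Matrix.star_dotProduct] at this
      simpa using this
    rw [hmv, dotProduct_smul, hcc, hc, smul_eq_mul, sq]
  rw [Matrix.sub_mulVec, dotProduct_sub, Matrix.smul_mulVec,
    dotProduct_smul, e1, e2, smul_eq_mul] at hq
  have key : ((∑ ℓ, σ ℓ - t⁻¹ * (∑ ℓ, ‖w ℓ‖)^2 : ℝ) : ℂ)
      = ∑ ℓ, (σ ℓ : ℂ) - (t : ℂ)⁻¹ * (∑ ℓ, (‖w ℓ‖ : ℂ))^2 := by
    push_cast; ring
  rw [← key] at hq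
  rw [Complex.zero_le_real] at hq
  linarith
end
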